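/- arXiv:2405.03288 — 4 statements merged into one kernel-verified Lean document; each statement's English description precedes it below -/
import Mathlib

section
/- Let c_1,...,c_N ∈ F_2^n be such that for every i ∈ {2,...,N} there exists j < i with d_H(c_i, c_j) = d. Then the volume of the union of Hamming balls satisfies |∪_{k=1}^N B(c_k, r)| ≤ N·V(n,r) − (N−1)·T(n,d,r), where T(n,d,r) is the volume of the intersection of two Hamming balls of radius r whose centers are at distance d. -/
open Finset


/-- Volume of a Hamming ball of radius `r` in `𝔽₂ⁿ`. -/
def V (n r : ℕ) : ℕ := (Finset.range (r + 1)).sum fun k => n.choose k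

/-- Hamming ball of radius `r` centered at `x`. -/
def hBall {n : ℕ} (x : Fin n → ZMod 2) (r : ℕ) : Finset (Fin n → ZMod 2) :=
  Finset.univ.filter fun y => hammingDist x y ≤ r

/-- Volume of the intersection of two Hamming balls of radius `r` whose
centers are at distance `d`. -/
def T (n d r : ℕ) : ℕ :=
  (Finset.range (d + 1)).sum fun s =>
    (Finset.range (n - d + 1)).sum fun t =>
      if s + t ≤ r ∧ t + d - s ≤ r then d.choose s * (n - d).choose t else 0

lemma zmod2_key (a b c : ZMod 2) :
    (b ≠ c) ↔ ((c ≠ a ∧ ¬ a ≠ b) ∨ (a ≠ b ∧ ¬ c ≠ a)) := by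
  revert a b c; decide

lemma zmod2_ext {a c c' : ZMod 2} (h : (c ≠ a) ↔ (c' ≠ a)) : c = c' := by
  revert a c c'; decide

lemma card_fiber {n : ℕ} (s t : ℕ) (S : Finset (Fin n)) :
    ((univ : Finset (Finset (Fin n))).filter
      fun D => (D ∩ S).card = s ∧ (D \ S).card = t).card
      = S.card.choose s * (Finset.univ \ S).card.choose t := by
  rw [← Finset.card_powersetCard s S, ← Finset.card_powersetCard t (Finset.univ \ S),
    ← card_product]
  apply card_bij' (fun D _ => (D ∩ S, D \ S) : _) (fun p _ => p.1 ∪ p.2)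
  · intro D hD
    simp only [mem_filter, mem_univ, true_and] at hD
    simp [mem_product, mem_powersetCard, hD.1, hD.2, inter_subset_right,
      sdiff_subset_sdiff (subset_univ D) (Finset.Subset.refl S)]
  · intro p hp
    simp only [mem_product, mem_powersetCard] at hp
    obtain ⟨⟨h1, h1c⟩, h2, h2c⟩ := hp
    have hBS : p.2 ∩ S = ∅ := by
      rw [← Finset.disjoint_iff_inter_eq_empty]
      exact Finset.disjoint_of_subset_left h2 (Finset.sdiff_disjoint)
    have e1 : (p.1 ∪ p.2) ∩ S = p.1 := by
      rw [Finset.union_inter_distrib_right, hBS, Finset.union_empty,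
        Finset.inter_eq_left.mpr h1]
    have e2 : (p.1 ∪ p.2) \ S = p.2 := by
      rw [Finset.union_sdiff_distrib, Finset.sdiff_eq_empty_iff_subset.mpr h1,
        Finset.empty_union, Finset.sdiff_eq_self_iff_disjoint.mpr
          (Finset.disjoint_of_subset_left h2 (Finset.sdiff_disjoint))]
    simp [mem_filter, e1, e2, h1c, h2c]
  · intro D hD
    rw [Finset.union_comm]; exact Finset.sdiff_union_inter D S
  · intro p hp
    simp only [mem_product, mem_powersetCard] at hp
    obtain ⟨⟨h1, h1c⟩, h2, h2c⟩ := hp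
    have hBS : p.2 ∩ S = ∅ := by
      rw [← Finset.disjoint_iff_inter_eq_empty]
      exact Finset.disjoint_of_subset_left h2 (Finset.sdiff_disjoint)
    have e1 : (p.1 ∪ p.2) ∩ S = p.1 := by
      rw [Finset.union_inter_distrib_right, hBS, Finset.union_empty,
        Finset.inter_eq_left.mpr h1]
    have e2 : (p.1 ∪ p.2) \ S = p.2 := by
      rw [Finset.union_sdiff_distrib, Finset.sdiff_eq_empty_iff_subset.mpr h1,
        Finset.empty_union, Finset.sdiff_eq_self_iff_disjoint.mpr
          (Finset.disjoint_of_subset_left h2 (Finset.sdiff_disjoint))]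
    simp [e1, e2]

lemma card_inter_balls {n : ℕ} (x y : Fin n → ZMod 2) (r : ℕ) :
    (hBall x r ∩ hBall y r).card = T n (hammingDist x y) r := by
  classical
  set S : Finset (Fin n) := Finset.univ.filter fun i => x i ≠ y i with hS
  set d := hammingDist x y with hdd
  have hSd : S.card = d := rfl
  have hdn : d ≤ n := by
    rw [← hSd]
    simpa using Finset.card_le_card (Finset.subset_univ S)
  -- Step A: bijection with subsets
  have stepA : (hBall x r ∩ hBall y r).card =
      ((univ : Finset (Finset (Fin n))).filter
        fun D => D.card ≤ r ∧ (D \ S).card + (S \ D).card ≤ r).card := by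
    have key : ∀ z : Fin n → ZMod 2,
        (hammingDist x z = (Finset.univ.filter fun i => z i ≠ x i).card) ∧
        (hammingDist y z =
          ((Finset.univ.filter fun i => z i ≠ x i) \ S).card
            + (S \ (Finset.univ.filter fun i => z i ≠ x i)).card) := by
      intro z
      constructor
      · simp only [hammingDist]
        congr 1
        ext i
        simp [ne_comm]
      · rw [← Finset.card_union_of_disjoint (disjoint_sdiff_sdiff)]
        simp only [hammingDist]
        congr 1
        ext i
        simp only [Finset.mem_union, Finset.mem_sdiff, Finset.mem_filter, Finset.mem_univ,
          true_and, hS]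
        exact zmod2_key (x i) (y i) (z i)
    apply card_bij' (fun z _ => Finset.univ.filter fun i => z i ≠ x i : _)
      (fun D _ => (fun i => if i ∈ D then x i + 1 else x i : Fin n → ZMod 2))
    · intro z hz
      simp only [Finset.mem_inter, hBall, Finset.mem_filter, Finset.mem_univ, true_and] at hz
      simp only [Finset.mem_filter, Finset.mem_univ, true_and]
      exact ⟨by rw [← (key z).1]; exact hz.1, by rw [← (key z).2]; exact hz.2⟩
    · intro D hD
      simp only [Finset.mem_filter, Finset.mem_univ, true_and] at hD
      have hfil : (Finset.univ.filter fun i =>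
          (if i ∈ D then x i + 1 else x i) ≠ x i) = D := by
        ext i
        simp only [Finset.mem_filter, Finset.mem_univ, true_and]
        by_cases h : i ∈ D <;> simp [h]
      simp only [Finset.mem_inter, hBall, Finset.mem_filter, Finset.mem_univ, true_and]
      refine ⟨?_, ?_⟩
      · rw [(key _).1, hfil]; exact hD.1
      · rw [(key _).2, hfil]; exact hD.2
    · intro z hz
      funext i
      by_cases h : z i ≠ x i <;> simp [h]
      · revert h; generalize z i = a; generalize x i = b; revert a b; decide
      · exact (not_ne_iff.mp h).symm
    · intro D hD
      ext i
      simp only [Finset.mem_filter, Finset.mem_univ, true_and]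
      by_cases h : i ∈ D <;> simp [h]
  rw [stepA]
  -- Step B: count the subsets
  rw [Finset.card_eq_sum_card_fiberwise
    (f := fun D : Finset (Fin n) => ((D ∩ S).card, (D \ S).card))
    (t := Finset.range (d + 1) ×ˢ Finset.range (n - d + 1)) ?_]
  · rw [T, ← Finset.sum_product']
    apply Finset.sum_congr rfl
    rintro ⟨s0, t0⟩ hp
    simp only [Finset.mem_product, Finset.mem_range, Nat.lt_succ_iff] at hp
    have hkey : ∀ D : Finset (Fin n), ((D ∩ S).card = s0 ∧ (D \ S).card = t0) →
        D.card = s0 + t0 ∧ (S \ D).card = d - s0 ∧ s0 ≤ d := by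
      intro D ⟨h1, h2⟩
      have e1 := Finset.card_inter_add_card_sdiff D S
      have e2 := Finset.card_sdiff_add_card_inter S D
      rw [Finset.inter_comm S D] at e2
      omega
    by_cases hcond : s0 + t0 ≤ r ∧ t0 + d - s0 ≤ r
    · rw [if_pos hcond]
      have : ((univ : Finset (Finset (Fin n))).filter
            fun D => D.card ≤ r ∧ (D \ S).card + (S \ D).card ≤ r).filter
            (fun D => ((D ∩ S).card, (D \ S).card) = (s0, t0)) =
          (univ : Finset (Finset (Fin n))).filter
            fun D => (D ∩ S).card = s0 ∧ (D \ S).card = t0 := by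
        ext D
        simp only [Finset.mem_filter, Finset.mem_univ, true_and, Prod.mk.injEq]
        constructor
        · rintro ⟨_, h⟩; exact h
        · intro h
          obtain ⟨e1, e2, e3⟩ := hkey D h
          exact ⟨⟨by omega, by omega⟩, h⟩
      rw [this, card_fiber, hSd]
      congr 1
      rw [Finset.card_sdiff_of_subset (Finset.subset_univ S), Finset.card_univ, Fintype.card_fin, hSd]
    · rw [if_neg hcond]
      rw [Finset.card_eq_zero, Finset.filter_eq_empty_iff]
      intro D hD
      simp only [Finset.mem_filter, Finset.mem_univ, true_and] at hD
      simp only [Prod.mk.injEq, not_and]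
      intro h1 h2
      obtain ⟨e1, e2, e3⟩ := hkey D ⟨h1, h2⟩
      omega
  · intro D hD
    simp only [Finset.mem_coe, Finset.mem_product, Finset.mem_range]
    constructor
    · exact Nat.lt_succ_of_le (hSd ▸ Finset.card_le_card (Finset.inter_subset_right))
    · have : D \ S ⊆ Finset.univ \ S := Finset.sdiff_subset_sdiff (Finset.subset_univ D) (le_refl S)
      have h2 := Finset.card_le_card this
      rw [Finset.card_sdiff_of_subset (Finset.subset_univ S), Finset.card_univ, Fintype.card_fin, hSd] at h2
      omega

lemma T_zero (n r : ℕ) : T n 0 r = V n r := by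
  have h1 : T n 0 r = ∑ t ∈ Finset.range (n + 1), if t ≤ r then n.choose t else 0 := by
    unfold T
    rw [Finset.sum_range_one]
    simp
  have h2 : V n r = ∑ t ∈ Finset.range (r + 1), if t ≤ r then n.choose t else 0 := by
    unfold V
    apply Finset.sum_congr rfl
    intro k hk
    rw [if_pos (by simpa [Nat.lt_succ_iff] using hk)]
  rw [h1, h2,
    Finset.sum_subset (Finset.range_subset_range.mpr (show n + 1 ≤ max n r + 1 by omega)) ?_,
    Finset.sum_subset (Finset.range_subset_range.mpr (show r + 1 ≤ max n r + 1 by omega)) ?_]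
  · intro t ht hnt
    simp only [Finset.mem_range] at ht hnt
    rw [if_neg (by omega)]
  · intro t ht hnt
    simp only [Finset.mem_range] at ht hnt
    rw [Nat.choose_eq_zero_of_lt (by omega)]
    simp

lemma card_ball {n : ℕ} (x : Fin n → ZMod 2) (r : ℕ) : (hBall x r).card = V n r := by
  have h := card_inter_balls x x r
  rwa [Finset.inter_self, hammingDist_self, T_zero] at h

lemma main_aux (n d r : ℕ) : ∀ N : ℕ, 1 ≤ N → ∀ c : Fin N → Fin n → ZMod 2,
    (∀ i : Fin N, 1 ≤ i.val → ∃ j : Fin N, j < i ∧ hammingDist (c i) (c j) = d) →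
    ((Finset.univ.biUnion fun k => hBall (c k) r).card : ℤ) ≤
      (N : ℤ) * V n r - (N - 1 : ℤ) * T n d r := by
  intro N
  induction N with
  | zero => omega
  | succ N ih =>
    intro _ c hchain
    by_cases hN0 : N = 0
    · subst hN0
      have hu : (Finset.univ : Finset (Fin 1)) = {0} := rfl
      rw [hu, Finset.singleton_biUnion, card_ball]
      push_cast
      ring_nf
      simp
    · have hN1 : 1 ≤ N := by omega
      set A := Finset.univ.biUnion fun k : Fin N => hBall (c k.castSucc) r with hA
      set B := hBall (c (Fin.last N)) r with hB
      have hU : (Finset.univ.biUnion fun k : Fin (N + 1) => hBall (c k) r) = A ∪ B := by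
        ext z
        simp only [hA, hB, Finset.mem_biUnion, Finset.mem_union, Finset.mem_univ, true_and]
        constructor
        · rintro ⟨k, hk⟩
          by_cases h : k.val < N
          · exact Or.inl ⟨⟨k.val, h⟩, by
              have : (⟨k.val, h⟩ : Fin N).castSucc = k := Fin.ext rfl
              rwa [this]⟩
          · have : k = Fin.last N := Fin.ext (by rw [Fin.val_last]; have := k.isLt; omega)
            exact Or.inr (this ▸ hk)
        · rintro (⟨k, hk⟩ | h)
          exacts [⟨k.castSucc, hk⟩, ⟨Fin.last N, h⟩]
      have hAcard : (A.card : ℤ) ≤ (N : ℤ) * V n r - (N - 1 : ℤ) * T n d r := by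
        apply ih hN1
        intro i hi
        obtain ⟨j, hj, hd⟩ := hchain i.castSucc (by simpa using hi)
        have hjN : j.val < N := by
          have h1 := Fin.lt_def.mp hj
          have h2 := i.isLt
          simp only [Fin.coe_castSucc] at h1
          omega
        refine ⟨⟨j.val, hjN⟩, ?_, ?_⟩
        · simpa [Fin.lt_def] using hj
        · have : (⟨j.val, hjN⟩ : Fin N).castSucc = j := Fin.ext rfl
          rw [this]
          exact hd
      have hBcard : (B.card : ℤ) = V n r := by rw [hB, card_ball]
      have hinter : (T n d r : ℤ) ≤ ((A ∩ B).card : ℤ) := by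
        obtain ⟨j, hj, hd⟩ := hchain (Fin.last N) (by rw [Fin.val_last]; omega)
        have hjN : j.val < N := by
          have h1 := Fin.lt_def.mp hj
          rw [Fin.val_last] at h1
          exact h1
        have hsub : hBall (c (Fin.last N)) r ∩ hBall (c j) r ⊆ A ∩ B := by
          intro z hz
          rw [Finset.mem_inter] at hz
          refine Finset.mem_inter.mpr ⟨Finset.mem_biUnion.mpr ⟨⟨j.val, hjN⟩, Finset.mem_univ _, ?_⟩, hz.1⟩
          have : (⟨j.val, hjN⟩ : Fin N).castSucc = j := Fin.ext rfl
          rw [this]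
          exact hz.2
        calc (T n d r : ℤ) = ((hBall (c (Fin.last N)) r ∩ hBall (c j) r).card : ℤ) := by
              rw [card_inter_balls, hd]
          _ ≤ _ := by exact_mod_cast Nat.cast_le.mpr (Finset.card_le_card hsub)
      have hcard := Finset.card_union_add_card_inter A B
      rw [hU]
      have : ((A ∪ B).card : ℤ) = (A.card : ℤ) + B.card - (A ∩ B).card := by
        omega
      rw [this]
      push_cast
      linarith

/-- Intersection bound: if the codewords form a chain where each one is at
distance exactly `d` from an earlier one, then the union of the balls of
radius `r` has volume at most `N·V(n,r) − (N−1)·T(n,d,r)`. -/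
theorem intersection_bound (n N d r : ℕ) (hN : 1 ≤ N) (c : Fin N → Fin n → ZMod 2)
    (hchain : ∀ i : Fin N, 1 ≤ i.val → ∃ j : Fin N, j < i ∧ hammingDist (c i) (c j) = d) :
    ((Finset.univ.biUnion fun k => hBall (c k) r).card : ℤ) ≤
      (N : ℤ) * V n r - (N - 1 : ℤ) * T n d r := main_aux n d r N hN c hchain
end

section
/- Let D ⊆ F_2^n be a connected set (in the Hamming graph) and let B, d_B be positive integers with |D| > (B−1)·V(n, d_B − 1). Then there exists a code C = {c_1,...,c_B} ⊆ D of size B with minimum Hamming distance at least d_B such that for every i ∈ {2,...,B} there exists j < i with d_H(c_i, c_j) = d_B exactly. -/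
/-- A subset of `𝔽₂ⁿ` is connected if any two of its points are joined by a
path inside it with steps of Hamming distance `1`. -/
def IsConnectedSet {n : ℕ} (D : Finset (Fin n → ZMod 2)) : Prop :=
  ∀ x ∈ D, ∀ y ∈ D, ∃ (t : ℕ) (p : ℕ → Fin n → ZMod 2),
    p 0 = x ∧ p t = y ∧ (∀ i ≤ t, p i ∈ D) ∧
    ∀ i < t, hammingDist (p i) (p (i + 1)) = 1

lemma ball_card_le (n r : ℕ) (x : Fin n → ZMod 2) :
    ((Finset.univ : Finset (Fin n → ZMod 2)).filter (fun y => hammingDist x y ≤ r)).card ≤ V n r := by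
  classical
  have key : ∀ a b c : ZMod 2, ((a ≠ c) ↔ (b ≠ c)) → a = b := by decide
  have h1 : ((Finset.univ : Finset (Fin n → ZMod 2)).filter (fun y => hammingDist x y ≤ r)).card ≤
      ((Finset.range (r+1)).biUnion (fun k => Finset.powersetCard k (Finset.univ : Finset (Fin n)))).card := by
    apply Finset.card_le_card_of_injOn (fun y => Finset.univ.filter (fun i => y i ≠ x i))
    · intro y hy
      simp only [Finset.mem_coe, Finset.mem_filter, Finset.mem_univ, true_and] at hy
      simp only [Finset.mem_coe, Finset.mem_biUnion, Finset.mem_range, Finset.mem_powersetCard]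
      refine ⟨(Finset.univ.filter (fun i => y i ≠ x i)).card, ?_, Finset.filter_subset _ _, rfl⟩
      have : (Finset.univ.filter (fun i => y i ≠ x i)).card = hammingDist y x := rfl
      rw [this, hammingDist_comm]
      omega
    · intro y _ z _ h
      funext i
      have := Finset.ext_iff.mp h i
      simp only [Finset.mem_filter, Finset.mem_univ, true_and] at this
      exact key _ _ _ this
  refine h1.trans ?_
  refine (Finset.card_biUnion_le).trans ?_
  unfold V
  apply Finset.sum_le_sum
  intro k _
  simp [Finset.card_powersetCard]

/-- On a large enough connected set one can select `B` codewords with minimum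
distance `d_B` such that each codeword is at distance exactly `d_B` from an
earlier one. -/
theorem connected_set_selection (n B dB : ℕ) (hB : 1 ≤ B) (hdB : 1 ≤ dB)
    (D : Finset (Fin n → ZMod 2)) (hD : IsConnectedSet D)
    (hcard : (B - 1) * V n (dB - 1) < D.card) :
    ∃ c : Fin B → Fin n → ZMod 2,
      (∀ i, c i ∈ D) ∧
      Function.Injective c ∧
      (∀ i j, i ≠ j → dB ≤ hammingDist (c i) (c j)) ∧
      ∀ i : Fin B, 1 ≤ i.val → ∃ j : Fin B, j < i ∧ hammingDist (c i) (c j) = dB := by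
  classical
  have key : ∀ m, 1 ≤ m → m ≤ B → ∃ c : Fin m → Fin n → ZMod 2,
      (∀ i, c i ∈ D) ∧
      (∀ i j, i ≠ j → dB ≤ hammingDist (c i) (c j)) ∧
      (∀ i : Fin m, 1 ≤ i.val → ∃ j : Fin m, j < i ∧ hammingDist (c i) (c j) = dB) := by
    intro m
    induction m with
    | zero => omega
    | succ m ih =>
      intro _ hmB
      by_cases hm : m = 0
      · subst hm
        have hD0 : D.Nonempty := Finset.card_pos.mp (by omega)
        obtain ⟨x, hx⟩ := hD0
        refine ⟨fun _ => x, fun _ => hx, ?_, ?_⟩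
        · intro i j hij
          exact absurd (Fin.ext (by omega)) hij
        · intro i hi
          omega
      · obtain ⟨c, hcD, hcdist, hcex⟩ := ih (by omega) (by omega)
        -- find y ∈ D far from all previous codewords
        have hy : ∃ y ∈ D, ∀ j : Fin m, dB ≤ hammingDist (c j) y := by
          by_contra h
          push_neg at h
          have hsub : D ⊆ Finset.univ.biUnion (fun j : Fin m =>
              Finset.univ.filter (fun y => hammingDist (c j) y ≤ dB - 1)) := by
            intro y hyD
            obtain ⟨j, hj⟩ := h y hyD
            simp only [Finset.mem_biUnion, Finset.mem_filter, Finset.mem_univ, true_and]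
            exact ⟨j, by omega⟩
          have h1 := Finset.card_le_card hsub
          have h2 : (Finset.univ.biUnion (fun j : Fin m =>
              Finset.univ.filter (fun y => hammingDist (c j) y ≤ dB - 1))).card ≤
              m * V n (dB - 1) := by
            refine (Finset.card_biUnion_le).trans ?_
            calc ∑ j : Fin m, (Finset.univ.filter (fun y => hammingDist (c j) y ≤ dB - 1)).card
                ≤ ∑ _j : Fin m, V n (dB - 1) :=
                  Finset.sum_le_sum (fun j _ => ball_card_le n (dB-1) (c j))
              _ = m * V n (dB - 1) := by simp [mul_comm]
          have hm1 : m * V n (dB - 1) ≤ (B - 1) * V n (dB - 1) :=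
            Nat.mul_le_mul_right _ (by omega)
          omega
        obtain ⟨y, hyD, hyfar⟩ := hy
        have hm0 : 0 < m := Nat.pos_of_ne_zero hm
        obtain ⟨t, p, hp0, hpt, hpD, hpstep⟩ := hD (c ⟨0, hm0⟩) (hcD _) y hyD
        have hQt : ∀ j : Fin m, dB ≤ hammingDist (c j) (p t) := by
          rw [hpt]; exact hyfar
        have hex : ∃ i, ∀ j : Fin m, dB ≤ hammingDist (c j) (p i) := ⟨t, hQt⟩
        set i0 := Nat.find hex with hi0def
        have hQ : ∀ j : Fin m, dB ≤ hammingDist (c j) (p i0) := Nat.find_spec hex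
        have hi0t : i0 ≤ t := Nat.find_min' hex hQt
        have hi0ne : i0 ≠ 0 := by
          intro h0
          have := hQ ⟨0, hm0⟩
          rw [h0, hp0, hammingDist_self] at this
          omega
        have hprev : ¬ ∀ j : Fin m, dB ≤ hammingDist (c j) (p (i0 - 1)) :=
          Nat.find_min hex (by omega)
        push_neg at hprev
        obtain ⟨j0, hj0⟩ := hprev
        have hstep : hammingDist (p (i0 - 1)) (p (i0 - 1 + 1)) = 1 := hpstep _ (by omega)
        have hsucc : i0 - 1 + 1 = i0 := by omega
        rw [hsucc] at hstep
        have hexact : hammingDist (c j0) (p i0) = dB := by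
          have htri := hammingDist_triangle (c j0) (p (i0 - 1)) (p i0)
          rw [hstep] at htri
          have := hQ j0
          omega
        refine ⟨Fin.snoc c (p i0), ?_, ?_, ?_⟩
        · intro i
          rcases Fin.eq_castSucc_or_eq_last i with ⟨i', rfl⟩ | rfl
          · rw [Fin.snoc_castSucc]; exact hcD i'
          · rw [Fin.snoc_last]; exact hpD i0 hi0t
        · intro i j hij
          rcases Fin.eq_castSucc_or_eq_last i with ⟨i', rfl⟩ | rfl <;>
            rcases Fin.eq_castSucc_or_eq_last j with ⟨j', rfl⟩ | rfl
          · rw [Fin.snoc_castSucc, Fin.snoc_castSucc]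
            apply hcdist
            intro h; exact hij (by rw [h])
          · rw [Fin.snoc_castSucc, Fin.snoc_last]
            exact hQ i'
          · rw [Fin.snoc_last, Fin.snoc_castSucc, hammingDist_comm]
            exact hQ j'
          · exact absurd rfl hij
        · intro i hi
          rcases Fin.eq_castSucc_or_eq_last i with ⟨i', rfl⟩ | rfl
          · obtain ⟨j, hjlt, hjd⟩ := hcex i' (by simpa using hi)
            exact ⟨j.castSucc, Fin.castSucc_lt_castSucc_iff.mpr hjlt,
              by rw [Fin.snoc_castSucc, Fin.snoc_castSucc]; exact hjd⟩
          · exact ⟨j0.castSucc, Fin.castSucc_lt_last j0,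
              by rw [Fin.snoc_last, Fin.snoc_castSucc, hammingDist_comm]; exact hexact⟩
  obtain ⟨c, hcD, hcdist, hcex⟩ := key B hB le_rfl
  refine ⟨c, hcD, ?_, hcdist, hcex⟩
  intro i j hij
  by_contra hne
  have := hcdist i j hne
  rw [hij, hammingDist_self] at this
  omega
end

section
/- Let n, A, B, d_A, d_B be positive integers with d_A ≥ d_B and 2^n > B·(A−1)·V(n, d_A − 1) + (B−1)·V(n, d_B − 1). Then there exists an injective map C : {1,...,A} × {1,...,B} → F_2^n such that any two codewords whose first message indices differ are at Hamming distance at least d_A, and any two distinct codewords are at Hamming distance at least d_B. -/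
lemma zmod2_eq_of_ne_iff {a b c : ZMod 2} (h : (a ≠ b) ↔ (a ≠ c)) : b = c := by
  revert h; revert a b c; decide

lemma card_ball_le (n r : ℕ) (x : Fin n → ZMod 2) :
    (Finset.univ.filter fun y => hammingDist x y ≤ r).card ≤ V n r := by
  classical
  set T := (Finset.range (r + 1)).biUnion
      (fun k => Finset.powersetCard k (Finset.univ : Finset (Fin n))) with hT
  have hTcard : T.card = V n r := by
    rw [hT, Finset.card_biUnion]
    · simp [V, Finset.card_powersetCard]
    · intro i hi j hj hij
      apply Finset.disjoint_left.mpr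
      intro s hs hs'
      rw [Finset.mem_powersetCard] at hs hs'
      exact hij (hs.2.symm.trans hs'.2)
  rw [← hTcard]
  apply Finset.card_le_card_of_injOn (fun y => Finset.univ.filter fun i => x i ≠ y i)
  · intro y hy
    simp only [Finset.mem_coe, Finset.mem_filter, Finset.mem_univ, true_and] at hy
    rw [Finset.mem_coe, hT, Finset.mem_biUnion]
    refine ⟨(Finset.univ.filter fun i => x i ≠ y i).card, ?_, ?_⟩
    · rw [Finset.mem_range]
      have hd : hammingDist x y = (Finset.univ.filter fun i => x i ≠ y i).card := rfl
      omega
    · rw [Finset.mem_powersetCard]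
      exact ⟨Finset.subset_univ _, rfl⟩
  · intro y _ z _ hyz
    funext i
    have h := Finset.ext_iff.mp hyz i
    simp only [Finset.mem_filter, Finset.mem_univ, true_and] at h
    exact zmod2_eq_of_ne_iff h

lemma exists_not_mem_of_card_lt {α} [Fintype α] [DecidableEq α] (S : Finset α)
    (h : S.card < Fintype.card α) : ∃ x, x ∉ S := by
  by_contra hc
  push_neg at hc
  have hsub : Finset.univ ⊆ S := fun x _ => hc x
  have := Finset.card_le_card hsub
  rw [Finset.card_univ] at this
  omega

lemma exists_greedy (n A B dA dB : ℕ)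
    (hA : 1 ≤ A) (hB : 1 ≤ B) (hdB : 1 ≤ dB) (hd : dB ≤ dA)
    (hsize : B * (A - 1) * V n (dA - 1) + (B - 1) * V n (dB - 1) < 2 ^ n) :
    ∀ m, m ≤ A * B → ∃ f : ℕ → (Fin n → ZMod 2), ∀ j k, j < k → k < m →
      dB ≤ hammingDist (f j) (f k) ∧ (j / B ≠ k / B → dA ≤ hammingDist (f j) (f k)) := by
  intro m
  induction m with
  | zero => exact fun _ => ⟨fun _ => 0, fun j k _ hk => absurd hk (Nat.not_lt_zero k)⟩
  | succ m ih =>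
    intro hm
    obtain ⟨f, hf⟩ := ih (Nat.le_of_succ_le hm)
    classical
    set r : ℕ → ℕ := fun j => if j / B = m / B then dB - 1 else dA - 1 with hr
    set S : Finset (Fin n → ZMod 2) := (Finset.range m).biUnion
        (fun j => Finset.univ.filter fun y => hammingDist (f j) y ≤ r j) with hS
    have hBpos : 0 < B := hB
    have hScard : S.card < 2 ^ n := by
      have h1 : S.card ≤ ∑ j ∈ Finset.range m, V n (r j) :=
        Finset.card_biUnion_le.trans
          (Finset.sum_le_sum fun j _ => card_ball_le n (r j) (f j))
      have hsplit : ∑ j ∈ Finset.range m, V n (r j)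
          = (∑ j ∈ (Finset.range m).filter (fun j => j / B = m / B), V n (r j))
          + ∑ j ∈ (Finset.range m).filter (fun j => ¬ j / B = m / B), V n (r j) :=
        (Finset.sum_filter_add_sum_filter_not _ _ _).symm
      have hsame : (∑ j ∈ (Finset.range m).filter (fun j => j / B = m / B), V n (r j))
          ≤ (B - 1) * V n (dB - 1) := by
        rw [Finset.sum_congr rfl (fun j hj => by
          simp only [Finset.mem_filter] at hj
          simp [hr, hj.2] : ∀ j ∈ (Finset.range m).filter (fun j => j / B = m / B),
            V n (r j) = V n (dB - 1)), Finset.sum_const, smul_eq_mul]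
        apply Nat.mul_le_mul_right
        have hsub : (Finset.range m).filter (fun j => j / B = m / B)
            ⊆ Finset.Ico (B * (m / B)) m := by
          intro j hj
          simp only [Finset.mem_filter, Finset.mem_range] at hj
          rw [Finset.mem_Ico]
          refine ⟨?_, hj.1⟩
          calc B * (m / B) = B * (j / B) := by rw [hj.2]
            _ ≤ j := by rw [mul_comm]; exact Nat.div_mul_le_self j B
        calc ((Finset.range m).filter (fun j => j / B = m / B)).card
            ≤ (Finset.Ico (B * (m / B)) m).card := Finset.card_le_card hsub
          _ = m - B * (m / B) := Nat.card_Ico _ _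
          _ ≤ B - 1 := by
              apply Nat.sub_le_of_le_add
              calc m = B * (m / B) + m % B := (Nat.div_add_mod m B).symm
                _ ≤ B * (m / B) + (B - 1) :=
                    Nat.add_le_add_left (Nat.le_pred_of_lt (Nat.mod_lt m hBpos)) _
                _ = B - 1 + B * (m / B) := add_comm _ _
      have hdiff : (∑ j ∈ (Finset.range m).filter (fun j => ¬ j / B = m / B), V n (r j))
          ≤ B * (A - 1) * V n (dA - 1) := by
        rw [Finset.sum_congr rfl (fun j hj => by
          simp only [Finset.mem_filter] at hj
          simp [hr, hj.2] : ∀ j ∈ (Finset.range m).filter (fun j => ¬ j / B = m / B),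
            V n (r j) = V n (dA - 1)), Finset.sum_const, smul_eq_mul]
        apply Nat.mul_le_mul_right
        have hsub : (Finset.range m).filter (fun j => ¬ j / B = m / B)
            ⊆ Finset.range (B * (m / B)) := by
          intro j hj
          simp only [Finset.mem_filter, Finset.mem_range] at hj ⊢
          have h1 : j / B ≤ m / B := Nat.div_le_div_right hj.1.le
          have h2 : j / B < m / B := lt_of_le_of_ne h1 hj.2
          exact ((Nat.div_lt_iff_lt_mul hBpos).mp h2).trans_le (le_of_eq (mul_comm _ _))
        calc ((Finset.range m).filter (fun j => ¬ j / B = m / B)).card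
            ≤ (Finset.range (B * (m / B))).card := Finset.card_le_card hsub
          _ = B * (m / B) := Finset.card_range _
          _ ≤ B * (A - 1) := by
              apply Nat.mul_le_mul_left
              have : m / B < A := (Nat.div_lt_iff_lt_mul hBpos).mpr
                (by rw [mul_comm] at hm ⊢; omega)
              omega
      have := hsize
      have h2 : (∑ j ∈ Finset.range m, V n (r j))
          ≤ B * (A - 1) * V n (dA - 1) + (B - 1) * V n (dB - 1) := by
        rw [hsplit]; omega
      omega
    have hcard2 : Fintype.card (Fin n → ZMod 2) = 2 ^ n := by
      rw [Fintype.card_fun, ZMod.card, Fintype.card_fin]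
    obtain ⟨x, hx⟩ := exists_not_mem_of_card_lt S (by rw [hcard2]; exact hScard)
    refine ⟨Function.update f m x, ?_⟩
    intro j k hjk hk
    have hxj : ∀ j', j' < m → r j' < hammingDist (f j') x := by
      intro j' hj'
      by_contra hcon
      push_neg at hcon
      exact hx (Finset.mem_biUnion.mpr ⟨j', Finset.mem_range.mpr hj',
        Finset.mem_filter.mpr ⟨Finset.mem_univ _, hcon⟩⟩)
    rcases Nat.lt_or_ge k m with hkm | hkm
    · have hj : j ≠ m := by omega
      have hk' : k ≠ m := by omega
      rw [Function.update_of_ne hj, Function.update_of_ne hk']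
      exact hf j k hjk hkm
    · have hkm' : k = m := by omega
      subst hkm'
      have hjm : j ≠ k := Nat.ne_of_lt hjk
      rw [Function.update_of_ne hjm, Function.update_self]
      have hj := hxj j hjk
      simp only [hr] at hj
      constructor
      · by_cases hc : j / B = k / B
        · rw [if_pos hc] at hj; omega
        · rw [if_neg hc] at hj; omega
      · intro hc
        rw [if_neg hc] at hj; omega

/-- GV bound for two-level UEP codes. -/
theorem uep_two_level_gv (n A B dA dB : ℕ)
    (hA : 1 ≤ A) (hB : 1 ≤ B) (hdB : 1 ≤ dB) (hd : dB ≤ dA)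
    (hsize : B * (A - 1) * V n (dA - 1) + (B - 1) * V n (dB - 1) < 2 ^ n) :
    ∃ C : Fin A × Fin B → Fin n → ZMod 2,
      Function.Injective C ∧
      (∀ p q : Fin A × Fin B, p.1 ≠ q.1 → dA ≤ hammingDist (C p) (C q)) ∧
      (∀ p q : Fin A × Fin B, p ≠ q → dB ≤ hammingDist (C p) (C q)) := by
  obtain ⟨f, hf⟩ := exists_greedy n A B dA dB hA hB hdB hd hsize (A * B) le_rfl
  set ι : Fin A × Fin B → ℕ := fun p => B * p.1.val + p.2.val with hι
  have hdiv : ∀ p, ι p / B = p.1.val := by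
    intro p
    simp only [hι]
    rw [Nat.mul_add_div hB, Nat.div_eq_of_lt p.2.isLt, add_zero]
  have hlt : ∀ p, ι p < A * B := by
    intro p
    have hp2 : p.2.val < B := p.2.isLt
    have h1 : B * p.1.val + p.2.val < B * (p.1.val + 1) := by
      rw [Nat.mul_succ]; omega
    calc ι p < B * (p.1.val + 1) := h1
      _ ≤ B * A := Nat.mul_le_mul_left B p.1.isLt
      _ = A * B := mul_comm B A
  have hinj : ∀ p q, ι p = ι q → p = q := by
    intro p q h
    have h1 : p.1.val = q.1.val := by rw [← hdiv p, ← hdiv q, h]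
    have h2 : B * p.1.val = B * q.1.val := by rw [h1]
    have h3 : p.2.val = q.2.val := by simp only [hι] at h; omega
    exact Prod.ext (Fin.ext h1) (Fin.ext h3)
  refine ⟨fun p => f (ι p), ?_, ?_, ?_⟩
  · intro p q hpq
    by_contra hne
    have hιne : ι p ≠ ι q := fun h => hne (hinj p q h)
    simp only at hpq
    rcases hιne.lt_or_gt with h | h
    · have hdd := (hf (ι p) (ι q) h (hlt q)).1
      rw [hpq, hammingDist_self] at hdd
      omega
    · have hdd := (hf (ι q) (ι p) h (hlt p)).1
      rw [hpq, hammingDist_self] at hdd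
      omega
  · intro p q hne1
    have hdivne : ι p / B ≠ ι q / B := by
      rw [hdiv, hdiv]; exact fun h => hne1 (Fin.ext h)
    have hιne : ι p ≠ ι q := fun h => hdivne (by rw [h])
    rcases hιne.lt_or_gt with h | h
    · exact (hf _ _ h (hlt q)).2 hdivne
    · rw [hammingDist_comm]
      exact (hf _ _ h (hlt p)).2 (Ne.symm hdivne)
  · intro p q hne
    have hιne : ι p ≠ ι q := fun h => hne (hinj p q h)
    rcases hιne.lt_or_gt with h | h
    · exact (hf _ _ h (hlt q)).1
    · rw [hammingDist_comm]
      exact (hf _ _ h (hlt p)).1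
end

section
/- Suppose F_2^n contains M pairwise disjoint Hamming balls of radius r. Then there exist M pairwise disjoint Hamming balls with centers a_1,...,a_M and radius r such that for every i ∈ {2,...,M} there exists j < i with d_H(a_i, a_j) = 2r + 1. -/
open Finset

namespace PackingRe

variable (n r : ℕ) {M : ℕ}

/-- pairwise distance condition -/
def Good (a : Fin M → Fin n → ZMod 2) : Prop :=
  ∀ i j, i ≠ j → 2 * r + 1 ≤ hammingDist (a i) (a j)

/-- exact-distance edge -/
def E (a : Fin M → Fin n → ZMod 2) (i j : Fin M) : Prop :=
  i ≠ j ∧ hammingDist (a i) (a j) = 2 * r + 1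

/-- connectivity -/
def C (a : Fin M → Fin n → ZMod 2) : Fin M → Fin M → Prop :=
  Relation.ReflTransGen (E n r a)

lemma E_symm {a : Fin M → Fin n → ZMod 2} {i j} (h : E n r a i j) : E n r a j i :=
  ⟨h.1.symm, by rw [hammingDist_comm]; exact h.2⟩

lemma C_symm {a : Fin M → Fin n → ZMod 2} {i j} (h : C n r a i j) : C n r a j i :=
  by
  induction h with
  | refl => exact Relation.ReflTransGen.refl
  | tail _ e ih => exact Relation.ReflTransGen.head (E_symm n r e) ih

lemma C_trans {a : Fin M → Fin n → ZMod 2} {i j k}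
    (h : C n r a i j) (h' : C n r a j k) : C n r a i k := h.trans h'

noncomputable def mu1 (a : Fin M → Fin n → ZMod 2) : ℕ :=
  {p : Fin M × Fin M | ¬ C n r a p.1 p.2}.ncard

noncomputable def mu2 (a : Fin M → Fin n → ZMod 2) : ℕ :=
  sInf {m | ∃ i j, ¬ C n r a i j ∧ hammingDist (a i) (a j) = m}

noncomputable def mu (a : Fin M → Fin n → ZMod 2) : ℕ :=
  mu1 n r a * (n + 2) + mu2 n r a

lemma mu2_le (a : Fin M → Fin n → ZMod 2) : mu2 n r a ≤ n := by
  rcases Set.eq_empty_or_nonempty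
      {m | ∃ i j, ¬ C n r a i j ∧ hammingDist (a i) (a j) = m} with he | hne
  · rw [mu2, he, Nat.sInf_empty]; exact Nat.zero_le n
  · obtain ⟨i, j, hc, hd⟩ := Nat.sInf_mem hne
    have h1 : mu2 n r a ≤ hammingDist (a i) (a j) := Nat.sInf_le ⟨i, j, hc, rfl⟩
    have h2 : hammingDist (a i) (a j) ≤ n := by
      simpa using (hammingDist_le_card_fintype (x := a i) (y := a j))
    omega


/-- unit vector -/
def uv (k : Fin n) : Fin n → ZMod 2 := fun t => if t = k then 1 else 0

lemma zmod2_ne {x y : ZMod 2} (h : x ≠ y) : x + 1 = y := by revert x y; decide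

lemma dist_add_same (k : Fin n) (x y : Fin n → ZMod 2) :
    hammingDist (x + uv n k) (y + uv n k) = hammingDist x y := by
  simp only [hammingDist, Pi.add_apply, ne_eq, add_left_inj]

lemma dist_add_uv_self (k : Fin n) (x : Fin n → ZMod 2) :
    hammingDist (x + uv n k) x = 1 := by
  have : (Finset.univ.filter fun i => (x + uv n k) i ≠ x i) = {k} := by
    ext i
    simp only [Finset.mem_filter, Finset.mem_univ, true_and, Finset.mem_singleton,
      Pi.add_apply, ne_eq, uv]
    by_cases hik : i = k <;> simp [hik]
  rw [hammingDist, this, Finset.card_singleton]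

lemma dist_add_uv_le (k : Fin n) (x y : Fin n → ZMod 2) :
    hammingDist (x + uv n k) y ≤ hammingDist x y + 1 ∧
    hammingDist x y ≤ hammingDist (x + uv n k) y + 1 := by
  constructor
  · calc hammingDist (x + uv n k) y ≤ hammingDist (x + uv n k) x + hammingDist x y :=
        hammingDist_triangle _ _ _
    _ = hammingDist x y + 1 := by rw [dist_add_uv_self]; ring
  · calc hammingDist x y ≤ hammingDist x (x + uv n k) + hammingDist (x + uv n k) y :=
        hammingDist_triangle _ _ _
    _ = hammingDist (x + uv n k) y + 1 := by
        rw [hammingDist_comm x, dist_add_uv_self]; ring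

lemma dist_flip (k : Fin n) (x y : Fin n → ZMod 2) (hk : x k ≠ y k) :
    hammingDist (x + uv n k) y + 1 = hammingDist x y := by
  have hmem : k ∈ Finset.univ.filter fun i => x i ≠ y i := by simp [hk]
  have hset : (Finset.univ.filter fun i => (x + uv n k) i ≠ y i) =
      (Finset.univ.filter fun i => x i ≠ y i).erase k := by
    ext i
    simp only [Finset.mem_filter, Finset.mem_univ, true_and, Finset.mem_erase,
      Pi.add_apply, ne_eq, uv]
    by_cases hik : i = k
    · subst hik
      erw [Finset.mem_filter]; simp [zmod2_ne hk]
    · erw [Finset.mem_filter]; simp [hik]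
  rw [hammingDist, hammingDist, hset, Finset.card_erase_of_mem hmem]
  have : 0 < (Finset.univ.filter fun i => x i ≠ y i).card := Finset.card_pos.mpr ⟨k, hmem⟩
  omega


lemma step (a : Fin M → Fin n → ZMod 2) (ha : Good n r a)
    (hdis : ∃ p q, ¬ C n r a p q) :
    ∃ b : Fin M → Fin n → ZMod 2, Good n r b ∧ mu n r b < mu n r a := by
  classical
  obtain ⟨p₀, q₀, hpq₀⟩ := hdis
  have hSne : {m | ∃ i j, ¬ C n r a i j ∧ hammingDist (a i) (a j) = m}.Nonempty :=
    ⟨_, p₀, q₀, hpq₀, rfl⟩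
  obtain ⟨p, q, hpq, hd⟩ := Nat.sInf_mem hSne
  have hdm : hammingDist (a p) (a q) = mu2 n r a := hd
  have hne : p ≠ q := by rintro rfl; exact hpq Relation.ReflTransGen.refl
  have hm1 : 2 * r + 1 ≤ mu2 n r a := hdm ▸ ha p q hne
  have hm2 : 2 * r + 2 ≤ mu2 n r a := by
    rcases Nat.lt_or_ge (2 * r + 1) (mu2 n r a) with h | h
    · omega
    · exfalso
      exact hpq (Relation.ReflTransGen.single ⟨hne, by omega⟩)
  have hapq : a p ≠ a q := by
    intro hEq
    rw [hEq, hammingDist_self] at hdm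
    omega
  obtain ⟨k, hk⟩ := Function.ne_iff.mp hapq
  set b : Fin M → Fin n → ZMod 2 :=
    fun i => if C n r a i p then a i + uv n k else a i with hb
  -- same side distances preserved
  have hsame : ∀ i j, (C n r a i p ↔ C n r a j p) →
      hammingDist (b i) (b j) = hammingDist (a i) (a j) := by
    intro i j hiff
    by_cases hip : C n r a i p
    · simp only [hb, if_pos hip, if_pos (hiff.mp hip), dist_add_same]
    · simp only [hb, if_neg hip, if_neg (fun hjp => hip (hiff.mpr hjp))]
  -- mixed sides means disconnected
  have hmix : ∀ i j, ¬ (C n r a i p ↔ C n r a j p) → ¬ C n r a i j := by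
    intro i j hiff hij
    exact hiff ⟨fun hip => C_trans n r (C_symm n r hij) hip,
                fun hjp => C_trans n r hij hjp⟩
  -- cross distances change by at most 1
  have hcross : ∀ i j, hammingDist (a i) (a j) ≤ hammingDist (b i) (b j) + 1 := by
    intro i j
    by_cases hip : C n r a i p <;> by_cases hjp : C n r a j p
    · rw [hsame i j (by tauto)]; omega
    · simp only [hb, if_pos hip, if_neg hjp]
      exact (dist_add_uv_le n k (a i) (a j)).2
    · simp only [hb, if_neg hip, if_pos hjp]
      rw [hammingDist_comm (a i) (a j), hammingDist_comm (a i) (a j + uv n k)]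
      exact (dist_add_uv_le n k (a j) (a i)).2
    · rw [hsame i j (by tauto)]; omega
  -- good
  have hgood : Good n r b := by
    intro i j hij
    by_cases hiff : C n r a i p ↔ C n r a j p
    · rw [hsame i j hiff]; exact ha i j hij
    · have hnc := hmix i j hiff
      have hmle : mu2 n r a ≤ hammingDist (a i) (a j) := Nat.sInf_le ⟨i, j, hnc, rfl⟩
      have := hcross i j
      omega
  -- edges preserved
  have hE : ∀ i j, E n r a i j → E n r b i j := by
    intro i j hij
    have hC : C n r a i j := Relation.ReflTransGen.single hij
    refine ⟨hij.1, ?_⟩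
    rw [hsame i j ⟨fun hip => C_trans n r (C_symm n r hC) hip,
        fun hjp => C_trans n r hC hjp⟩]
    exact hij.2
  have hCmono : ∀ i j, C n r a i j → C n r b i j := by
    intro i j hij
    exact Relation.ReflTransGen.mono (fun x y h => hE x y h) _ _ hij
  -- chosen pair gets closer
  have hbp : b p = a p + uv n k := by
    simp only [hb]
    exact if_pos (Relation.ReflTransGen.refl)
  have hbq : b q = a q := by
    simp only [hb, if_neg (fun h => hpq (C_symm n r h))]
  have hdrop : hammingDist (b p) (b q) + 1 = mu2 n r a := by
    rw [hbp, hbq, dist_flip n k (a p) (a q) hk]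
    exact hdm
  -- measure comparison
  have hsub : {x : Fin M × Fin M | ¬ C n r b x.1 x.2} ⊆
      {x : Fin M × Fin M | ¬ C n r a x.1 x.2} :=
    fun x hx hc => hx (hCmono _ _ hc)
  refine ⟨b, hgood, ?_⟩
  by_cases hnew : ∀ i j, C n r b i j → C n r a i j
  · -- no new connections
    have hset : {x : Fin M × Fin M | ¬ C n r b x.1 x.2} =
        {x : Fin M × Fin M | ¬ C n r a x.1 x.2} := by
      ext x
      exact ⟨fun hx => hsub hx, fun hx hc => hx (hnew _ _ hc)⟩
    have hmu1 : mu1 n r b = mu1 n r a := by rw [mu1, mu1, hset]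
    have hnbc : ¬ C n r b p q := fun hc => hpq (hnew _ _ hc)
    have hmu2 : mu2 n r b ≤ hammingDist (b p) (b q) := Nat.sInf_le ⟨p, q, hnbc, rfl⟩
    rw [mu, mu, hmu1]
    omega
  · -- a new connection appeared
    push_neg at hnew
    obtain ⟨i, j, hbij, haij⟩ := hnew
    have hssub : {x : Fin M × Fin M | ¬ C n r b x.1 x.2} ⊂
        {x : Fin M × Fin M | ¬ C n r a x.1 x.2} :=
      ⟨hsub, fun h => (h (Set.mem_setOf.mpr haij : ((i, j) : Fin M × Fin M) ∈ _)) hbij⟩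
    have hmu1 : mu1 n r b < mu1 n r a :=
      Set.ncard_lt_ncard hssub (Set.toFinite _)
    have h2b := mu2_le n r b
    calc mu n r b = mu1 n r b * (n + 2) + mu2 n r b := rfl
    _ < (mu1 n r b + 1) * (n + 2) := by
        have hexp : (mu1 n r b + 1) * (n + 2) = mu1 n r b * (n + 2) + (n + 2) := by ring
        omega
    _ ≤ mu1 n r a * (n + 2) := Nat.mul_le_mul_right _ hmu1
    _ ≤ mu n r a := Nat.le_add_right _ _


lemma connectify (a : Fin M → Fin n → ZMod 2) (ha : Good n r a) :
    ∃ b : Fin M → Fin n → ZMod 2, Good n r b ∧ ∀ i j, C n r b i j := by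
  by_cases hdis : ∃ p q, ¬ C n r a p q
  · obtain ⟨b, hb, hmu⟩ := step n r a ha hdis
    exact connectify b hb
  · push_neg at hdis
    exact ⟨a, ha, hdis⟩
termination_by mu n r a
decreasing_by exact hmu

/-- reachability within `k` steps from index 0 -/
def reach [NeZero M] (b : Fin M → Fin n → ZMod 2) : ℕ → Fin M → Prop
  | 0, i => i = 0
  | k + 1, i => ∃ u, reach b k u ∧ (E n r b u i ∨ u = i)

lemma reach_of_C [NeZero M] (b : Fin M → Fin n → ZMod 2) (i : Fin M)
    (h : C n r b 0 i) : ∃ k, reach n r b k i := by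
  induction h with
  | refl => exact ⟨0, by simp [reach]⟩
  | tail _ e ih =>
      obtain ⟨k, hk⟩ := ih
      exact ⟨k + 1, _, hk, Or.inl e⟩

noncomputable def dG [NeZero M] (b : Fin M → Fin n → ZMod 2) (i : Fin M) : ℕ :=
  sInf {k | reach n r b k i}

lemma dG_spec [NeZero M] (b : Fin M → Fin n → ZMod 2) (hc : ∀ i j, C n r b i j)
    (i : Fin M) : reach n r b (dG n r b i) i := by
  have hne : {k | reach n r b k i}.Nonempty := reach_of_C n r b i (hc 0 i)
  exact Nat.sInf_mem hne

lemma dG_zero_iff [NeZero M] (b : Fin M → Fin n → ZMod 2) (hc : ∀ i j, C n r b i j)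
    (i : Fin M) : dG n r b i = 0 ↔ i = 0 := by
  constructor
  · intro h
    have := dG_spec n r b hc i
    rw [h] at this
    simpa [reach] using this
  · rintro rfl
    exact Nat.sInf_eq_zero.mpr (Or.inl (by simp [reach]))

lemma dG_succ [NeZero M] (b : Fin M → Fin n → ZMod 2) (hc : ∀ i j, C n r b i j)
    (i : Fin M) (k : ℕ) (h : dG n r b i = k + 1) :
    ∃ u, E n r b u i ∧ dG n r b u < dG n r b i := by
  have hr := dG_spec n r b hc i
  rw [h] at hr
  obtain ⟨u, hu, he⟩ := hr
  rcases he with he | rfl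
  · refine ⟨u, he, ?_⟩
    calc dG n r b u ≤ k := Nat.sInf_le hu
    _ < k + 1 := Nat.lt_succ_self k
    _ = dG n r b i := h.symm
  · exfalso
    have : dG n r b u ≤ k := Nat.sInf_le hu
    omega

end PackingRe

/-- A packing of disjoint Hamming balls can be rearranged so that the centers
form a chain-connected configuration at exact distance `2r+1`. -/
theorem packing_rearrangement (n M r : ℕ)
    (h : ∃ a : Fin M → Fin n → ZMod 2,
      ∀ i j, i ≠ j → 2 * r + 1 ≤ hammingDist (a i) (a j)) :
    ∃ a : Fin M → Fin n → ZMod 2,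
      (∀ i j, i ≠ j → 2 * r + 1 ≤ hammingDist (a i) (a j)) ∧
      ∀ i : Fin M, 1 ≤ i.val →
        ∃ j : Fin M, j < i ∧ hammingDist (a i) (a j) = 2 * r + 1 := by
  obtain ⟨a0, ha0⟩ := h
  rcases Nat.eq_zero_or_pos M with rfl | hM
  · exact ⟨a0, ha0, fun i => i.elim0⟩
  haveI : NeZero M := ⟨by omega⟩
  obtain ⟨b, hb, hc⟩ := PackingRe.connectify n r a0 ha0
  set σ := Tuple.sort (PackingRe.dG n r b) with hσ
  refine ⟨b ∘ σ, ?_, ?_⟩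
  · intro i j hij
    exact hb (σ i) (σ j) (fun hEq => hij (σ.injective hEq))
  · intro i hi
    have hi0 : i ≠ 0 := by
      intro hEq
      rw [hEq] at hi
      simp at hi
    have hmono : Monotone (PackingRe.dG n r b ∘ σ) := Tuple.monotone_sort _
    have h0 : PackingRe.dG n r b (σ i) ≠ 0 := by
      intro hz
      have hσi : σ i = 0 := (PackingRe.dG_zero_iff n r b hc (σ i)).mp hz
      have h00 : PackingRe.dG n r b (σ 0) = 0 := by
        have h1 := hmono (show (0 : Fin M) ≤ i from Fin.zero_le (a := i))
        simp only [Function.comp_apply] at h1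
        omega
      have hσ0 : σ 0 = 0 := (PackingRe.dG_zero_iff n r b hc (σ 0)).mp h00
      exact hi0 (σ.injective (hσi.trans hσ0.symm))
    obtain ⟨k, hk⟩ := Nat.exists_eq_succ_of_ne_zero h0
    obtain ⟨u, he, hlt⟩ := PackingRe.dG_succ n r b hc (σ i) k hk
    refine ⟨σ.symm u, ?_, ?_⟩
    · by_contra hle
      push_neg at hle
      have h1 := hmono hle
      simp only [Function.comp_apply, Equiv.apply_symm_apply] at h1
      omega
    · simp only [Function.comp_apply, Equiv.apply_symm_apply]
      rw [hammingDist_comm]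
      exact he.2
end
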